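/- Let π : M̃ → M be a C^∞ local diffeomorphism between smooth manifolds, X a vector field on M, and X̃ a vector field on M̃ that is π-related to X. If γ : ℝ → M is an integral curve of X and γ̃ : ℝ → M̃ is any continuous map with π ∘ γ̃ = γ, then γ̃ is an integral curve of X̃. In other words, every continuous lift of an integral curve of X is an integral curve of the lifted vector field. -/

import Mathlib

open Manifold Set

/-- **Lifts of integral curves.** If `π : M' → M` is a `C^∞` local diffeomorphism,
`X` a vector field on `M` and `X'` a vector field on `M'` that is `π`-related to `X`,
then any continuous lift `γ'` (i.e. `π ∘ γ' = γ`) of an integral curve `γ` of `X`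
is an integral curve of `X'`. -/
theorem isIntegralCurve_lift_of_comp_eq
    {E : Type*} [NormedAddCommGroup E] [NormedSpace ℝ E]
    {H : Type*} [TopologicalSpace H] (I : ModelWithCorners ℝ E H)
    {M : Type*} [TopologicalSpace M] [ChartedSpace H M] [IsManifold I (⊤ : ℕ∞) M]
    {M' : Type*} [TopologicalSpace M'] [ChartedSpace H M'] [IsManifold I (⊤ : ℕ∞) M']
    (π : M' → M) (hπ : IsLocalDiffeomorph I I (⊤ : ℕ∞) π)
    (X : (x : M) → TangentSpace I x) (X' : (p : M') → TangentSpace I p)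
    (hrel : ∀ p : M', mfderiv I I π p (X' p) = X (π p))
    (γ : ℝ → M) (hγ : IsMIntegralCurve γ X)
    (γ' : ℝ → M') (hcont : Continuous γ') (hlift : π ∘ γ' = γ) :
    IsMIntegralCurve γ' X' := by
  subst hlift
  intro t
  obtain ⟨Φ, hmem, heq⟩ := hπ (γ' t)
  have htgt : π (γ' t) ∈ Φ.target := heq hmem ▸ Φ.toPartialEquiv.map_source hmem
  have hπdiff : MDifferentiableAt I I π (γ' t) := (hπ (γ' t)).mdifferentiableAt (by simp)
  have hsymm : MDifferentiableAt I I Φ.symm (π (γ' t)) :=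
    Φ.symm.mdifferentiableAt (by simp) htgt
  -- eventually, γ' s ∈ Φ.source
  have hnhds : ∀ᶠ s in nhds t, γ' s ∈ Φ.source :=
    hcont.continuousAt.preimage_mem_nhds (Φ.open_source.mem_nhds hmem)
  have hev : γ' =ᶠ[nhds t] Φ.symm ∘ (π ∘ γ') := by
    filter_upwards [hnhds] with s hs
    show γ' s = Φ.invFun (π (γ' s))
    rw [show π (γ' s) = Φ (γ' s) from heq hs]
    exact (Φ.toPartialEquiv.left_inv hs).symm
  have hev2 : (Φ.symm ∘ π : M' → M') =ᶠ[nhds (γ' t)] id := by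
    filter_upwards [Φ.open_source.mem_nhds hmem] with p hp
    show Φ.invFun (π p) = p
    rw [show π p = Φ p from heq hp]
    exact Φ.toPartialEquiv.left_inv hp
  have hcomp : (mfderiv I I Φ.symm (π (γ' t))).comp (mfderiv I I π (γ' t)) =
      ContinuousLinearMap.id ℝ (TangentSpace I (γ' t)) := by
    rw [← mfderiv_comp (γ' t) hsymm hπdiff, hev2.mfderiv_eq, mfderiv_id]
  have hX' : mfderiv I I Φ.symm (π (γ' t)) (X (π (γ' t))) = X' (γ' t) := by
    rw [← hrel (γ' t)]
    exact DFunLike.congr_fun hcomp (X' (γ' t))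
  have h1 := hsymm.hasMFDerivAt.comp t (hγ t)
  have h2 := h1.congr_of_eventuallyEq hev
  have hder : (mfderiv I I Φ.symm (π (γ' t))).comp
      ((1 : ℝ →L[ℝ] ℝ).smulRight (X ((π ∘ γ') t))) =
      (1 : ℝ →L[ℝ] ℝ).smulRight (X' (γ' t)) := by
    ext
    simp only [ContinuousLinearMap.comp_apply, ContinuousLinearMap.smulRight_apply,
      ContinuousLinearMap.one_apply, one_smul]
    simp only [Function.comp_apply, hX']
    exact (one_smul ℝ (X' (γ' t))).symm
  exact h2.congr_mfderiv hder
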